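/- Let F be a differential field of characteristic zero and let E be an iterated antiderivative extension of F. Then E is a purely transcendental extension of F, and E admits a transcendence base over F consisting of iterated antiderivatives of F. -/

import Mathlib

/-- A derivation on a field: an additive map satisfying the Leibniz rule. -/
def IsDeriv {E : Type*} [Field E] (D : E → E) : Prop :=
  (∀ x y : E, D (x + y) = D x + D y) ∧ ∀ x y : E, D (x * y) = D x * y + x * D y

/-- A subfield closed under the derivation, i.e. a differential subfield. -/
def IsDiffSubfield {E : Type*} [Field E] (D : E → E) (K : Subfield E) : Prop :=
  ∀ x ∈ K, D x ∈ K

/-- The subfield generated by a subfield `F` together with a set `S`, i.e. `F(S)`. -/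
def adjoinSF {E : Type*} [Field E] (F : Subfield E) (S : Set E) : Subfield E :=
  Subfield.closure (↑F ∪ S)

/-- `ζ 0, …, ζ (n-1)` are iterated antiderivatives of `F`:
`(ζ i)' ∈ F(ζ 0, …, ζ (i-1))` for every `i`. -/
def IsIterAntideriv {E : Type*} [Field E] (D : E → E) (F : Subfield E) {n : ℕ}
    (ζ : Fin n → E) : Prop :=
  ∀ i, D (ζ i) ∈ adjoinSF F (ζ '' {j | j < i})

/-- `M` is a no new constants extension of `K`: the constants of `M` are exactly
the constants of `K`. -/
def NoNewConstants {E : Type*} [Field E] (D : E → E) (K M : Subfield E) : Prop :=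
  K ≤ M ∧ ∀ x ∈ M, D x = 0 → x ∈ K

/-- `K` is an iterated antiderivative extension of `F`. -/
def IsIAE {E : Type*} [Field E] (D : E → E) (F K : Subfield E) : Prop :=
  NoNewConstants D F K ∧
    ∃ (n : ℕ) (ζ : Fin n → E), IsIterAntideriv D F ζ ∧ K = adjoinSF F (Set.range ζ)

/-- `K` is an antiderivative extension of `F`. -/
def IsAE {E : Type*} [Field E] (D : E → E) (F K : Subfield E) : Prop :=
  NoNewConstants D F K ∧
    ∃ (n : ℕ) (ζ : Fin n → E), (∀ i, D (ζ i) ∈ (F : Set E)) ∧ K = adjoinSF F (Set.range ζ)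

/-- A differential automorphism of `E` over `F`: a field automorphism fixing `F`
pointwise and commuting with the derivation. -/
def IsDiffAut {E : Type*} [Field E] (D : E → E) (F : Subfield E) (σ : E ≃+* E) : Prop :=
  (∀ x ∈ F, σ x = x) ∧ ∀ y : E, σ (D y) = D (σ y)

/-- `M` is a minimal differential field extension of `K`. -/
def IsMinimalDiffExt {E : Type*} [Field E] (D : E → E) (K M : Subfield E) : Prop :=
  IsDiffSubfield D M ∧ K < M ∧
    ∀ L : Subfield E, IsDiffSubfield D L → K ≤ L → L ≤ M → L = K ∨ L = M

/-- The field of constants of a differential subfield `F`. -/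
def constantsOf {E : Type*} [Field E] (D : E → E) (hD : IsDeriv D) (F : Subfield E) :
    Subfield E where
  carrier := {x : E | x ∈ F ∧ D x = 0}
  zero_mem' := by
    refine ⟨F.zero_mem, ?_⟩
    have h := hD.1 0 0
    simp only [add_zero] at h
    exact left_eq_add.mp h
  one_mem' := by
    refine ⟨F.one_mem, ?_⟩
    have h := hD.2 1 1
    simp only [mul_one, one_mul] at h
    exact left_eq_add.mp h
  add_mem' := by
    rintro a b ⟨haF, ha⟩ ⟨hbF, hb⟩
    exact ⟨F.add_mem haF hbF, by rw [hD.1 a b, ha, hb, add_zero]⟩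
  mul_mem' := by
    rintro a b ⟨haF, ha⟩ ⟨hbF, hb⟩
    exact ⟨F.mul_mem haF hbF, by rw [hD.2 a b, ha, hb, zero_mul, mul_zero, add_zero]⟩
  neg_mem' := by
    rintro a ⟨haF, ha⟩
    refine ⟨F.neg_mem haF, ?_⟩
    have h0 : D 0 = 0 := by
      have h := hD.1 0 0
      simp only [add_zero] at h
      exact left_eq_add.mp h
    have h := hD.1 a (-a)
    rw [add_neg_cancel, h0, ha, zero_add] at h
    exact h.symm
  inv_mem' := by
    rintro a ⟨haF, ha⟩
    refine ⟨F.inv_mem haF, ?_⟩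
    by_cases h0 : a = 0
    · subst h0; rw [inv_zero]; exact ha
    · have h1 : D 1 = 0 := by
        have h := hD.2 1 1
        simp only [mul_one, one_mul] at h
        exact left_eq_add.mp h
      have h := hD.2 a a⁻¹
      rw [mul_inv_cancel₀ h0, h1, ha, zero_mul, zero_add] at h
      rcases mul_eq_zero.mp h.symm with h' | h'
      · exact absurd h' h0
      · exact h'

/-- The antiderivative closure of `L` in `E`: the subfield generated over `L`
by all antiderivatives of `L` lying in `E`. -/
def adCl {E : Type*} [Field E] (D : E → E) (L : Subfield E) : Subfield E :=
  adjoinSF L {x : E | D x ∈ L}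

/-- The differential subfield generated by `F` and `u`, i.e. `F⟨u⟩ = F(u, u', u'', …)`. -/
def diffAdjoin {E : Type*} [Field E] (D : E → E) (F : Subfield E) (u : E) : Subfield E :=
  sInf {M : Subfield E | IsDiffSubfield D M ∧ F ≤ M ∧ u ∈ M}

/-- The transcendence degree of `K` over `F` (both viewed inside an ambient field `E`):
the supremum of cardinalities of subsets of `K` that are algebraically independent
over `F`. -/
noncomputable def trdegSF {E : Type*} [Field E] (F K : Subfield E) : Cardinal :=
  ⨆ s : {s : Set E // s ⊆ (K : Set E) ∧ AlgebraicIndependent F ((↑) : s → E)},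
    Cardinal.mk s.1
section AuxAdjoin

variable {E : Type*} [Field E]

theorem adjoinSF_le {F : Subfield E} {S : Set E} {M : Subfield E}
    (h1 : F ≤ M) (h2 : S ⊆ M) : adjoinSF F S ≤ M :=
  Subfield.closure_le.2 (Set.union_subset h1 h2)

theorem le_adjoinSF (F : Subfield E) (S : Set E) : F ≤ adjoinSF F S :=
  fun _ hx => Subfield.subset_closure (Set.mem_union_left _ hx)

theorem subset_adjoinSF (F : Subfield E) (S : Set E) : S ⊆ ↑(adjoinSF F S) :=
  fun _ hx => Subfield.subset_closure (Set.mem_union_right _ hx)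

theorem adjoinSF_mono {F : Subfield E} {S T : Set E} (h : S ⊆ T) :
    adjoinSF F S ≤ adjoinSF F T :=
  adjoinSF_le (le_adjoinSF _ _) fun x hx => subset_adjoinSF _ _ (h hx)

theorem adjoinSF_union (F : Subfield E) (S T : Set E) :
    adjoinSF F (S ∪ T) = adjoinSF (adjoinSF F S) T := by
  apply le_antisymm
  · exact adjoinSF_le ((le_adjoinSF F S).trans (le_adjoinSF _ T))
      (Set.union_subset ((subset_adjoinSF F S).trans (le_adjoinSF _ T))
        (subset_adjoinSF _ T))
  · exact adjoinSF_le (adjoinSF_le (le_adjoinSF _ _)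
      fun x hx => subset_adjoinSF _ _ (Set.mem_union_left _ hx))
      fun x hx => subset_adjoinSF _ _ (Set.mem_union_right _ hx)

theorem adjoinSF_eq_self {F : Subfield E} {S : Set E} (h : S ⊆ ↑F) :
    adjoinSF F S = F :=
  le_antisymm (adjoinSF_le le_rfl h) (le_adjoinSF _ _)

theorem adjoinSF_congr {F : Subfield E} {S T U : Set E}
    (h : adjoinSF F S = adjoinSF F T) :
    adjoinSF F (S ∪ U) = adjoinSF F (T ∪ U) := by
  rw [adjoinSF_union, adjoinSF_union, h]

end AuxAdjoin

section AuxDeriv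

variable {E : Type*} [Field E] {D : E → E}

theorem IsDeriv.zero (hD : IsDeriv D) : D 0 = 0 := by
  have h := hD.1 0 0
  simp only [add_zero] at h
  exact left_eq_add.mp h

theorem IsDeriv.one (hD : IsDeriv D) : D 1 = 0 := by
  have h := hD.2 1 1
  simp only [mul_one, one_mul] at h
  exact left_eq_add.mp h

theorem IsDeriv.natCast (hD : IsDeriv D) (n : ℕ) : D (n : E) = 0 := by
  induction n with
  | zero => exact_mod_cast hD.zero
  | succ k ih => push_cast; rw [hD.1, ih, hD.one, add_zero]

theorem IsDeriv.sum (hD : IsDeriv D) {ι : Type*} (s : Finset ι) (f : ι → E) :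
    D (∑ i ∈ s, f i) = ∑ i ∈ s, D (f i) := by
  classical
  induction s using Finset.induction with
  | empty => simpa using hD.zero
  | insert a s hx ih => rw [Finset.sum_insert hx, hD.1, ih, Finset.sum_insert hx]

theorem IsDeriv.pow (hD : IsDeriv D) (x : E) (k : ℕ) : D (x ^ k) = (k : E) * x ^ (k - 1) * D x := by
  induction k with
  | zero => simpa using hD.one
  | succ k ih =>
    rw [pow_succ, hD.2, ih]
    cases k with
    | zero => simp
    | succ m => push_cast [Nat.add_sub_cancel]; ring

theorem IsDeriv.inv (hD : IsDeriv D) (x : E) : D x⁻¹ = -(D x * (x⁻¹ * x⁻¹)) := by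
  by_cases hx : x = 0
  · subst hx; simp [hD.zero]
  · have h := hD.2 x x⁻¹
    rw [mul_inv_cancel₀ hx, hD.one] at h
    have h3 : x * D x⁻¹ = -(D x * x⁻¹) := by linear_combination -h
    have h4 : D x⁻¹ = x⁻¹ * (x * D x⁻¹) := by rw [← mul_assoc, inv_mul_cancel₀ hx, one_mul]
    rw [h4, h3]; ring

/-- The differential part of a subfield `M`: elements of `M` whose derivative is in `M`. -/
def diffPart (hD : IsDeriv D) (M : Subfield E) : Subfield E where
  carrier := {x : E | x ∈ M ∧ D x ∈ M}
  zero_mem' := ⟨M.zero_mem, by rw [hD.zero]; exact M.zero_mem⟩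
  one_mem' := ⟨M.one_mem, by rw [hD.one]; exact M.zero_mem⟩
  add_mem' := by
    rintro a b ⟨ha, ha'⟩ ⟨hb, hb'⟩
    exact ⟨M.add_mem ha hb, by rw [hD.1]; exact M.add_mem ha' hb'⟩
  mul_mem' := by
    rintro a b ⟨ha, ha'⟩ ⟨hb, hb'⟩
    exact ⟨M.mul_mem ha hb, by rw [hD.2]; exact M.add_mem (M.mul_mem ha' hb) (M.mul_mem ha hb')⟩
  neg_mem' := by
    rintro a ⟨ha, ha'⟩
    refine ⟨M.neg_mem ha, ?_⟩
    have : D (-a) = -D a := by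
      have h := hD.1 a (-a)
      rw [add_neg_cancel, hD.zero] at h
      linear_combination -h
    rw [this]; exact M.neg_mem ha'
  inv_mem' := by
    rintro a ⟨ha, ha'⟩
    exact ⟨M.inv_mem ha, by
      rw [hD.inv]
      exact M.neg_mem (M.mul_mem ha' (M.mul_mem (M.inv_mem ha) (M.inv_mem ha)))⟩

theorem mem_diffPart (hD : IsDeriv D) {M : Subfield E} {x : E} :
    x ∈ diffPart hD M ↔ x ∈ M ∧ D x ∈ M := Iff.rfl

theorem isDiffSubfield_adjoinSF (hD : IsDeriv D) {F : Subfield E} (hF : IsDiffSubfield D F)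
    {t : ℕ} {η : Fin t → E} (hη : IsIterAntideriv D F η) {s : Set (Fin t)}
    (hs : ∀ ⦃j k : Fin t⦄, j < k → k ∈ s → j ∈ s) :
    IsDiffSubfield D (adjoinSF F (η '' s)) := by
  set M := adjoinSF F (η '' s) with hM
  have key : adjoinSF F (η '' s) ≤ diffPart hD M := by
    apply adjoinSF_le
    · intro x hx
      exact ⟨le_adjoinSF F _ hx, le_adjoinSF F _ (hF x hx)⟩
    · rintro _ ⟨j, hj, rfl⟩
      refine ⟨subset_adjoinSF F _ ⟨j, hj, rfl⟩, ?_⟩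
      have := hη j
      exact adjoinSF_mono (Set.image_mono (f := η) fun k hk => hs hk hj) this
  intro x hx
  exact ((key hx).2 : D x ∈ M)

end AuxDeriv
section KeyLemma

variable {E : Type*} [Field E] [CharZero E] {D : E → E}

theorem mem_of_isAlgebraic_antideriv (hD : IsDeriv D) {F K : Subfield E}
    (hFK : F ≤ K) (hK : IsDiffSubfield D K)
    (hconst : ∀ x : E, D x = 0 → x ∈ F)
    {ζ : E} (hζ : D ζ ∈ K) (halg : IsAlgebraic (↥K) ζ) : ζ ∈ K := by
  classical
  have hex : ∃ m : ℕ, ∃ b : ℕ → E, (∀ k, b k ∈ K) ∧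
      ζ ^ m + ∑ k ∈ Finset.range m, b k * ζ ^ k = 0 := by
    obtain ⟨p, hp0, hpe⟩ := halg
    set q : Polynomial E := p.map (algebraMap K E) with hq
    have hq0 : q ≠ 0 := by
      rw [hq, Ne, Polynomial.map_eq_zero_iff (algebraMap K E).injective]
      exact hp0
    have hqe : q.eval ζ = 0 := by
      rw [hq, Polynomial.eval_map, ← Polynomial.aeval_def]
      exact hpe
    have hlead : q.coeff q.natDegree ≠ 0 := Polynomial.leadingCoeff_ne_zero.2 hq0
    have hcoef : ∀ k, q.coeff k ∈ K := by
      intro k; rw [hq, Polynomial.coeff_map]; exact (p.coeff k).2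
    refine ⟨q.natDegree, fun k => q.coeff k / q.coeff q.natDegree,
      fun k => K.div_mem (hcoef k) (hcoef q.natDegree), ?_⟩
    have hsum : ∑ k ∈ Finset.range (q.natDegree + 1), q.coeff k * ζ ^ k = 0 := by
      rw [← Polynomial.eval_eq_sum_range]; exact hqe
    rw [Finset.sum_range_succ] at hsum
    have h2 : q.coeff q.natDegree *
        (ζ ^ q.natDegree + ∑ k ∈ Finset.range q.natDegree,
          q.coeff k / q.coeff q.natDegree * ζ ^ k) = 0 := by
      rw [mul_add, Finset.mul_sum]
      have hterm : ∀ k ∈ Finset.range q.natDegree,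
          q.coeff q.natDegree * (q.coeff k / q.coeff q.natDegree * ζ ^ k)
            = q.coeff k * ζ ^ k := fun k _ => by
        rw [← mul_assoc, mul_div_cancel₀ _ hlead]
      rw [Finset.sum_congr rfl hterm]
      linear_combination hsum
    rcases mul_eq_zero.1 h2 with h | h
    · exact absurd h hlead
    · exact h
  obtain ⟨m, hPm, hmin⟩ : ∃ m, (∃ b : ℕ → E, (∀ k, b k ∈ K) ∧
      ζ ^ m + ∑ k ∈ Finset.range m, b k * ζ ^ k = 0) ∧
      ∀ r < m, ¬ ∃ b : ℕ → E, (∀ k, b k ∈ K) ∧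
        ζ ^ r + ∑ k ∈ Finset.range r, b k * ζ ^ k = 0 :=
    ⟨Nat.find hex, Nat.find_spec hex, fun r hr => Nat.find_min hex hr⟩
  have hm1 : m ≠ 0 := by
    rintro rfl
    obtain ⟨b, -, heq⟩ := hPm
    simp at heq
  obtain ⟨m', rfl⟩ : ∃ k, m = k + 1 := ⟨m - 1, by omega⟩
  obtain ⟨b, hb, heq⟩ := hPm
  -- linear independence of 1, ζ, ..., ζ^m'
  have hli : ∀ c : ℕ → E, (∀ k, c k ∈ K) →
      ∑ k ∈ Finset.range (m' + 1), c k * ζ ^ k = 0 → ∀ k < m' + 1, c k = 0 := by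
    intro c hc hsum
    by_contra hcon
    push_neg at hcon
    obtain ⟨k0, hk0m, hk0⟩ := hcon
    set s := (Finset.range (m' + 1)).filter (fun k => c k ≠ 0) with hs
    have hne : s.Nonempty := ⟨k0, by simp [hs, Finset.mem_range.2 hk0m, hk0]⟩
    set r := s.max' hne with hr
    have hrs : r ∈ s := s.max'_mem hne
    have hrm : r < m' + 1 := Finset.mem_range.1 (Finset.mem_filter.1 hrs).1
    have hcr : c r ≠ 0 := (Finset.mem_filter.1 hrs).2
    have hzero : ∀ k ∈ Finset.range (m' + 1), k ∉ Finset.range (r + 1) → c k * ζ ^ k = 0 := by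
      intro k hk hk'
      have hck : c k = 0 := by
        by_contra h
        have hks : k ∈ s := Finset.mem_filter.2 ⟨hk, h⟩
        have := Finset.le_max' s k hks
        simp only [Finset.mem_range] at hk'
        omega
      simp [hck]
    have hsum2 : ∑ k ∈ Finset.range (r + 1), c k * ζ ^ k = 0 := by
      rw [Finset.sum_subset (Finset.range_subset_range.2 (by omega)) hzero]
      exact hsum
    refine hmin r hrm ⟨fun k => c k / c r, fun k => K.div_mem (hc k) (hc r), ?_⟩
    rw [Finset.sum_range_succ] at hsum2
    have h2 : c r * (ζ ^ r + ∑ k ∈ Finset.range r, c k / c r * ζ ^ k) = 0 := by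
      rw [mul_add, Finset.mul_sum]
      have hterm : ∀ k ∈ Finset.range r,
          c r * (c k / c r * ζ ^ k) = c k * ζ ^ k := fun k _ => by
        rw [← mul_assoc, mul_div_cancel₀ _ hcr]
      rw [Finset.sum_congr rfl hterm]
      linear_combination hsum2
    rcases mul_eq_zero.1 h2 with h | h
    · exact absurd h hcr
    · exact h
  -- differentiate the minimal relation
  set b' : ℕ → E := fun k => if k = m' + 1 then 1 else b k with hb'
  set c : ℕ → E := fun k => D (b k) + ((k : E) + 1) * b' (k + 1) * D ζ with hc'
  have hc : ∀ k, c k ∈ K := by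
    intro k
    refine K.add_mem (hK _ (hb k)) (K.mul_mem (K.mul_mem
      (K.add_mem (natCast_mem K k) K.one_mem) ?_) hζ)
    simp only [hb']
    split
    · exact K.one_mem
    · exact hb (k + 1)
  have hdiff : D (ζ ^ (m' + 1)) + ∑ k ∈ Finset.range (m' + 1), D (b k * ζ ^ k) = 0 := by
    rw [← hD.sum, ← hD.1, heq, hD.zero]
  have hterm : ∀ k ∈ Finset.range (m' + 1), D (b k * ζ ^ k)
      = D (b k) * ζ ^ k + b k * ((k : E) * ζ ^ (k - 1) * D ζ) := fun k _ => by
    rw [hD.2, hD.pow]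
  rw [hD.pow ζ (m' + 1), Finset.sum_congr rfl hterm, Finset.sum_add_distrib] at hdiff
  have e3 : ∑ k ∈ Finset.range (m' + 1), b k * ((k : E) * ζ ^ (k - 1) * D ζ)
      = ∑ k ∈ Finset.range m', ((k : E) + 1) * b (k + 1) * D ζ * ζ ^ k := by
    rw [Finset.sum_range_succ']
    simp only [Nat.cast_zero, zero_mul, mul_zero, add_zero, Nat.add_sub_cancel]
    refine Finset.sum_congr rfl fun k _ => ?_
    push_cast
    ring
  rw [e3, Nat.add_sub_cancel] at hdiff
  have hsum0 : ∑ k ∈ Finset.range (m' + 1), c k * ζ ^ k = 0 := by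
    have e1 : ∑ k ∈ Finset.range (m' + 1), c k * ζ ^ k
        = ∑ k ∈ Finset.range (m' + 1), D (b k) * ζ ^ k
          + ∑ k ∈ Finset.range (m' + 1), ((k : E) + 1) * b' (k + 1) * D ζ * ζ ^ k := by
      rw [← Finset.sum_add_distrib]
      refine Finset.sum_congr rfl fun k _ => ?_
      simp only [hc']
      ring
    have e2 : ∑ k ∈ Finset.range (m' + 1), ((k : E) + 1) * b' (k + 1) * D ζ * ζ ^ k
        = (∑ k ∈ Finset.range m', ((k : E) + 1) * b (k + 1) * D ζ * ζ ^ k)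
          + ((m' : E) + 1) * D ζ * ζ ^ m' := by
      rw [Finset.sum_range_succ]
      congr 1
      · refine Finset.sum_congr rfl fun k hk => ?_
        have hkm : k + 1 ≠ m' + 1 := by
          have := Finset.mem_range.1 hk; omega
        simp only [hb', if_neg hkm]
      · simp [hb']
    rw [e1, e2]
    push_cast at hdiff
    linear_combination hdiff
  have hcm' : c m' = 0 := hli c hc hsum0 m' (by omega)
  simp only [hc', hb'] at hcm'
  simp only [if_pos rfl, reduceIte, if_true, mul_one] at hcm'
  -- hcm' : D (b m') + ((m' : E) + 1) * D ζ = 0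
  have hDnat : D ((m' : E) + 1) = 0 := by
    have := hD.natCast (m' + 1)
    push_cast at this
    exact this
  have hDu : D (((m' : E) + 1) * ζ + b m') = 0 := by
    rw [hD.1, hD.2, hDnat]
    linear_combination hcm'
  have hu : ((m' : E) + 1) * ζ + b m' ∈ F := hconst _ hDu
  have hne : ((m' : E) + 1) ≠ 0 := Nat.cast_add_one_ne_zero m'
  have hzeta : ζ = ((((m' : E) + 1) * ζ + b m') - b m') / ((m' : E) + 1) := by
    field_simp
    ring
  rw [hzeta]
  exact K.div_mem (K.sub_mem (hFK hu) (hb m')) (K.add_mem (natCast_mem K m') K.one_mem)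

end KeyLemma
section Main

variable {E : Type*} [Field E]

theorem isAlgebraic_subfield_of_subalgebra {F K : Subfield E}
    {A : Subalgebra (↥F) E} (hAK : ∀ x : E, x ∈ A → x ∈ K) {x : E}
    (h : IsAlgebraic (↥A) x) : IsAlgebraic (↥K) x := by
  obtain ⟨p, hp0, hpe⟩ := h
  let g : ↥A →+* ↥K :=
    { toFun := fun a => ⟨(a : E), hAK a a.2⟩
      map_one' := rfl
      map_mul' := fun _ _ => rfl
      map_zero' := rfl
      map_add' := fun _ _ => rfl }
  have hginj : Function.Injective g := fun a b hab =>
    Subtype.ext (show (a : E) = (b : E) from congrArg (fun w : ↥K => (w : E)) hab)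
  refine ⟨p.map g, ?_, ?_⟩
  · rw [Ne, Polynomial.map_eq_zero_iff hginj]; exact hp0
  · rw [Polynomial.aeval_def, Polynomial.eval₂_map]
    have hcomp : (algebraMap (↥K) E).comp g = algebraMap (↥A) E := RingHom.ext fun a => rfl
    rw [hcomp, ← Polynomial.aeval_def]
    exact hpe

theorem build_basis [CharZero E] {D : E → E} (hD : IsDeriv D)
    {F : Subfield E} (hF : IsDiffSubfield D F)
    (hconst : ∀ x : E, D x = 0 → x ∈ F)
    {n : ℕ} {ζ : Fin n → E} (hζ : IsIterAntideriv D F ζ) :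
    ∀ i : ℕ, i ≤ n → ∃ (t : ℕ) (η : Fin t → E), IsIterAntideriv D F η ∧
      AlgebraicIndependent (↥F) η ∧
      adjoinSF F (Set.range η) = adjoinSF F (ζ '' {j : Fin n | (j : ℕ) < i}) := by
  intro i
  induction i with
  | zero =>
    intro _
    refine ⟨0, Fin.elim0, fun j => j.elim0, ?_, ?_⟩
    · exact algebraicIndependent_empty_type_iff.2 (algebraMap (↥F) E).injective
    · have h1 : Set.range (Fin.elim0 : Fin 0 → E) = ∅ := Set.range_eq_empty _
      have h2 : {j : Fin n | (j : ℕ) < 0} = ∅ := by ext j; simp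
      rw [h1, h2, Set.image_empty]
  | succ i ih =>
    intro hin
    obtain ⟨t, η, h1, h2, h3⟩ := ih (by omega)
    have hi : i < n := hin
    set ι : Fin n := ⟨i, hi⟩ with hι
    have hsetlt : {j : Fin n | j < ι} = {j : Fin n | (j : ℕ) < i} := by
      ext j; simp [Fin.lt_def, hι]
    have hDζ : D (ζ ι) ∈ adjoinSF F (Set.range η) := by
      rw [h3, ← hsetlt]
      exact hζ ι
    have hset : {j : Fin n | (j : ℕ) < i + 1} = {j : Fin n | (j : ℕ) < i} ∪ {ι} := by
      ext j
      simp only [Set.mem_setOf_eq, Set.mem_union, Set.mem_singleton_iff]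
      constructor
      · intro h
        rcases Nat.lt_succ_iff_lt_or_eq.1 h with h | h
        · exact Or.inl h
        · exact Or.inr (Fin.ext h)
      · rintro (h | rfl)
        · omega
        · exact Nat.lt_succ_self _
    have himg : ζ '' {j : Fin n | (j : ℕ) < i + 1}
        = ζ '' {j : Fin n | (j : ℕ) < i} ∪ {ζ ι} := by
      rw [hset, Set.image_union, Set.image_singleton]
    have hKdiff : IsDiffSubfield D (adjoinSF F (Set.range η)) := by
      have h := isDiffSubfield_adjoinSF hD hF h1 (s := Set.univ) (fun _ _ _ _ => trivial)
      rwa [Set.image_univ] at h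
    have hFK : F ≤ adjoinSF F (Set.range η) := le_adjoinSF _ _
    by_cases halg : IsAlgebraic (↥(adjoinSF F (Set.range η))) (ζ ι)
    · have hmem : ζ ι ∈ adjoinSF F (Set.range η) :=
        mem_of_isAlgebraic_antideriv hD hFK hKdiff hconst hDζ halg
      refine ⟨t, η, h1, h2, ?_⟩
      rw [himg, adjoinSF_union, ← h3,
        adjoinSF_eq_self (Set.singleton_subset_iff.2 hmem), h3]
    · have hadle : Algebra.adjoin (↥F) (Set.range η)
          ≤ { (adjoinSF F (Set.range η)).toSubring with
              algebraMap_mem' := fun r => hFK r.2 } :=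
        Algebra.adjoin_le (fun x hx => subset_adjoinSF F _ hx)
      have hAK : ∀ x : E, x ∈ Algebra.adjoin (↥F) (Set.range η)
          → x ∈ adjoinSF F (Set.range η) := fun x hx => hadle hx
      have htrans : Transcendental (↥(Algebra.adjoin (↥F) (Set.range η))) (ζ ι) := fun h =>
        halg (isAlgebraic_subfield_of_subalgebra hAK h)
      have hopt : AlgebraicIndependent (↥F) (fun o : Option (Fin t) => o.elim (ζ ι) η) :=
        (h2.option_iff_transcendental (ζ ι)).2 htrans
      refine ⟨t + 1, Fin.snoc η (ζ ι), ?_, ?_, ?_⟩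
      · intro j
        refine Fin.lastCases ?_ ?_ j
        · rw [Fin.snoc_last]
          refine adjoinSF_mono ?_ hDζ
          rintro x ⟨k, rfl⟩
          exact ⟨Fin.castSucc k, Fin.castSucc_lt_last k, Fin.snoc_castSucc _ _ _⟩
        · intro k
          rw [Fin.snoc_castSucc]
          refine adjoinSF_mono ?_ (h1 k)
          rintro x ⟨l, hl, rfl⟩
          exact ⟨Fin.castSucc l, Fin.castSucc_lt_castSucc_iff.2 hl, Fin.snoc_castSucc _ _ _⟩
      · have hcomp : (fun o : Option (Fin t) => o.elim (ζ ι) η) ∘ ⇑(finSuccEquivLast (n := t))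
            = Fin.snoc η (ζ ι) := by
          funext j
          refine Fin.lastCases ?_ ?_ j
          · simp [finSuccEquivLast_last]
          · intro k; simp [finSuccEquivLast_castSucc]
        have h := hopt.comp (⇑(finSuccEquivLast (n := t))) (Equiv.injective _)
        rwa [hcomp] at h
      · have hrange : Set.range (Fin.snoc η (ζ ι) : Fin (t + 1) → E)
            = Set.range η ∪ {ζ ι} := by
          ext x
          constructor
          · rintro ⟨j, rfl⟩
            refine Fin.lastCases ?_ ?_ j
            · right; rw [Fin.snoc_last]; rfl
            · intro k; left; rw [Fin.snoc_castSucc]; exact ⟨k, rfl⟩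
          · rintro (⟨k, rfl⟩ | rfl)
            · exact ⟨Fin.castSucc k, Fin.snoc_castSucc _ _ _⟩
            · exact ⟨Fin.last t, Fin.snoc_last _ _⟩
        rw [hrange, himg, adjoinSF_union, adjoinSF_union, h3]

end Main
set_option synthInstance.maxHeartbeats 1000000 in
set_option maxHeartbeats 2000000 in

/-- an iterated antiderivative extension `E` of `F` (here `E` is the
ambient field, i.e. `⊤`) is purely transcendental over `F`, with a transcendence
base consisting of iterated antiderivatives of `F`. -/
theorem statement1 {E : Type*} [Field E] [CharZero E] (D : E → E) (hD : IsDeriv D)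
    (F : Subfield E) (hF : IsDiffSubfield D F)
    (hIAE : IsIAE D F ⊤) :
    ∃ (t : ℕ) (η : Fin t → E), IsIterAntideriv D F η ∧ AlgebraicIndependent F η ∧
      adjoinSF F (Set.range η) = ⊤ ∧ IsTranscendenceBasis F η := by
  obtain ⟨⟨hle, hcst⟩, n, ζ, hiter, htop⟩ := hIAE
  have hconst : ∀ x : E, D x = 0 → x ∈ F := fun x hx => hcst x trivial hx
  obtain ⟨t, η, h1, h2, h3⟩ := build_basis hD hF hconst hiter n le_rfl
  have hall : ζ '' {j : Fin n | (j : ℕ) < n} = Set.range ζ := by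
    rw [show {j : Fin n | (j : ℕ) < n} = Set.univ from by ext j; simp [j.isLt],
      Set.image_univ]
  rw [hall, ← htop] at h3
  -- every element of E is algebraic over the adjoined ring
  have halgall : ∀ x : E, IsAlgebraic (↥(Algebra.adjoin (↥F) (Set.range η))) x := by
    intro x
    have hx : x ∈ Subfield.closure ((F : Set E) ∪ Set.range η) := by
      have hx' : x ∈ adjoinSF F (Set.range η) := by rw [h3]; trivial
      exact hx'
    rw [Subfield.mem_closure_iff] at hx
    obtain ⟨y, hy, z, hz, hxyz⟩ := hx
    have hsub : Subring.closure ((F : Set E) ∪ Set.range η)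
        ≤ (Algebra.adjoin (↥F) (Set.range η)).toSubring := by
      apply Subring.closure_le.2
      rintro w (hw | hw)
      · exact (Algebra.adjoin (↥F) (Set.range η)).algebraMap_mem ⟨w, hw⟩
      · exact Algebra.subset_adjoin hw
    by_cases hz0 : z = 0
    · have hx0 : x = 0 := by rw [← hxyz, hz0, div_zero]
      rw [hx0]
      exact isAlgebraic_zero
    · refine ⟨Polynomial.C (⟨z, hsub hz⟩ : Algebra.adjoin (↥F) (Set.range η)) * Polynomial.X
        - Polynomial.C ⟨y, hsub hy⟩, ?_, ?_⟩
      · intro h0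
        have hco := congrArg (fun p => Polynomial.coeff p 1) h0
        simp only [Polynomial.coeff_sub, Polynomial.coeff_C_mul, Polynomial.coeff_X_one,
          mul_one, Polynomial.coeff_C, Polynomial.coeff_zero] at hco
        norm_num at hco
        exact hz0 (congrArg Subtype.val hco)
      · simp only [map_sub, map_mul, Polynomial.aeval_C, Polynomial.aeval_X]
        show z * x - y = 0
        rw [← hxyz, mul_div_cancel₀ y hz0, sub_self]
  refine ⟨t, η, h1, h2, h3, h2, ?_⟩
  intro s hs hsubs
  refine Set.Subset.antisymm hsubs fun a ha => ?_
  by_contra hnot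
  let f : Option (Fin t) → ↥s := fun o => o.elim ⟨a, ha⟩ (fun k => ⟨η k, hsubs ⟨k, rfl⟩⟩)
  have hfinj : Function.Injective f := by
    intro o1 o2 h
    have hval : ((f o1 : ↥s) : E) = ((f o2 : ↥s) : E) := congrArg (fun w : ↥s => (w : E)) h
    cases o1 with
    | none => cases o2 with
      | none => rfl
      | some k => exact absurd ⟨k, hval.symm⟩ hnot
    | some k => cases o2 with
      | none => exact absurd ⟨k, hval⟩ hnot
      | some l => exact congrArg some (h2.injective hval)
  have hcompind : AlgebraicIndependent F (((↑) : ↥s → E) ∘ f) := hs.comp f hfinj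
  have hcomp : ((↑) : ↥s → E) ∘ f = fun o : Option (Fin t) => o.elim a η := by
    funext o; cases o <;> rfl
  rw [hcomp] at hcompind
  exact (h2.option_iff_transcendental a).1 hcompind (halgall a)
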